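/- For any connected graph G on n vertices and any real numbers p_1, …, p_n ∈ (0,1), the k-distance domination number satisfies γ_k(G) ≤ Σ_{i=1}^{n} ( p_i + (1 - p_i) · Π_{j ∈ N_k(i)} (1 - p_j) ). -/

import Mathlib

open SimpleGraph Finset

open scoped Classical

section Aux

variable {V : Type*} [Fintype V]

/-- weight of a subset under independent Bernoulli(p) choices -/
noncomputable def bw (p : V → ℝ) (S : Finset V) : ℝ :=
  (∏ i ∈ S, p i) * ∏ i ∈ univ \ S, (1 - p i)

lemma bw_pos (p : V → ℝ) (hp : ∀ i, p i ∈ Set.Ioo (0 : ℝ) 1) (S : Finset V) :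
    0 < bw p S := by
  apply mul_pos
  · exact prod_pos fun i _ => (hp i).1
  · exact prod_pos fun i _ => by linarith [(hp i).2]

lemma bw_sum (p : V → ℝ) : ∑ S ∈ (univ : Finset V).powerset, bw p S = 1 := by
  have h := Finset.prod_add p (fun i => 1 - p i) (univ : Finset V)
  have hl : ∏ i ∈ (univ : Finset V), (p i + (1 - p i)) = 1 := by
    have he : ∀ i ∈ (univ : Finset V), p i + (1 - p i) = (1:ℝ) := fun i _ => by ring
    rw [Finset.prod_congr rfl he, prod_const_one]
  rw [hl] at h
  simp only [bw]
  exact h.symm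

lemma bw_mem (p : V → ℝ) (i : V) :
    ∑ S ∈ (univ : Finset V).powerset, (if i ∈ S then bw p S else 0) = p i := by
  have h := Finset.prod_add p (fun j => if j = i then 0 else 1 - p j) (univ : Finset V)
  have hl : ∏ j ∈ (univ : Finset V), (p j + if j = i then 0 else 1 - p j)
      = p i := by
    rw [Finset.prod_eq_single i]
    · simp
    · intro j _ hj; simp [hj]
    · simp
  rw [hl] at h
  rw [h]
  apply Finset.sum_congr rfl
  intro S hS
  by_cases hi : i ∈ S
  · have : i ∉ univ \ S := by simp [hi]
    simp only [hi, if_pos, bw]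
    congr 1
    apply Finset.prod_congr rfl
    intro j hj
    have : j ≠ i := fun h => (mem_sdiff.mp hj).2 (h ▸ hi)
    simp [this]
  · simp only [hi, if_neg, not_false_iff]
    have hiu : i ∈ univ \ S := by simp [hi]
    rw [Finset.prod_eq_zero hiu (by simp), mul_zero]

lemma bw_disj (p : V → ℝ) (A : Finset V) :
    ∑ S ∈ (univ : Finset V).powerset, (if S ∩ A = ∅ then bw p S else 0)
      = ∏ j ∈ A, (1 - p j) := by
  have h := Finset.prod_add (fun j => if j ∈ A then 0 else p j)
      (fun j => 1 - p j) (univ : Finset V)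
  have hl : ∏ j ∈ (univ : Finset V), ((if j ∈ A then 0 else p j) + (1 - p j))
      = ∏ j ∈ A, (1 - p j) := by
    rw [← Finset.prod_filter_mul_prod_filter_not univ (fun j => j ∈ A)]
    have h1 : (univ : Finset V).filter (fun j => j ∈ A) = A := by
      ext x; simp
    rw [h1]
    have h2 : ∏ j ∈ A, ((if j ∈ A then 0 else p j) + (1 - p j)) = ∏ j ∈ A, (1 - p j) := by
      apply Finset.prod_congr rfl; intro j hj; simp [hj]
    have h3 : ∏ j ∈ (univ : Finset V).filter (fun j => ¬ j ∈ A),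
        ((if j ∈ A then 0 else p j) + (1 - p j)) = ∏ j ∈ (univ : Finset V).filter (fun j => ¬ j ∈ A), (1:ℝ) := by
      apply Finset.prod_congr rfl; intro j hj
      have := (mem_filter.mp hj).2
      simp [this]
    rw [h2, h3, prod_const_one, mul_one]
  rw [hl] at h
  rw [h]
  apply Finset.sum_congr rfl
  intro S hS
  by_cases hSA : S ∩ A = ∅
  · simp only [hSA, if_pos]
    rw [bw]
    congr 1
    apply Finset.prod_congr rfl
    intro j hj
    have : j ∉ A := fun hjA => by
      have : j ∈ S ∩ A := mem_inter.mpr ⟨hj, hjA⟩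
      simp [hSA] at this
    simp [this]
  · simp only [hSA, if_neg, not_false_iff]
    obtain ⟨j, hj⟩ := Finset.nonempty_iff_ne_empty.mpr hSA
    rw [Finset.prod_eq_zero (mem_inter.mp hj).1 (by simp [(mem_inter.mp hj).2]), zero_mul]

end Aux

open scoped Classical in
theorem stmt_12 {V : Type*} [Fintype V]
    (G : SimpleGraph V) (hconn : G.Connected) (k : ℕ)
    (p : V → ℝ) (hp : ∀ i, p i ∈ Set.Ioo (0 : ℝ) 1) :
    ((sInf {n : ℕ | ∃ D : Finset V, D.card = n ∧
        ∀ v, v ∉ D → ∃ u ∈ D, G.dist u v ≤ k} : ℕ) : ℝ) ≤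
      ∑ i, (p i + (1 - p i) *
        ∏ j ∈ univ.filter (fun j => j ≠ i ∧ G.dist i j ≤ k), (1 - p j)) := by
  -- the set of "undominated" vertices for a choice S
  set U : Finset V → Finset V :=
    fun S => univ.filter (fun i => i ∉ S ∧ ∀ u ∈ S, ¬ G.dist u i ≤ k) with hU
  set A : V → Finset V :=
    fun i => insert i (univ.filter (fun j => j ≠ i ∧ G.dist i j ≤ k)) with hA
  set E : ℝ := ∑ i, (p i + (1 - p i) *
      ∏ j ∈ univ.filter (fun j => j ≠ i ∧ G.dist i j ≤ k), (1 - p j)) with hE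
  -- membership in U S is a disjointness condition
  have hUA : ∀ (S : Finset V) (i : V), i ∈ U S ↔ S ∩ A i = ∅ := by
    intro S i
    simp only [hU, hA, mem_filter, mem_univ, true_and]
    constructor
    · rintro ⟨hiS, hdom⟩
      ext x
      simp only [mem_inter, mem_insert, mem_filter, mem_univ, true_and, notMem_empty,
        iff_false, not_and]
      rintro hxS (rfl | ⟨hxi, hd⟩)
      · exact hiS hxS
      · exact hdom x hxS (by rwa [SimpleGraph.dist_comm])
    · intro hdisj
      constructor
      · intro hiS
        have : i ∈ S ∩ A i := mem_inter.mpr ⟨hiS, by simp [hA]⟩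
        simp only [hA] at this; rw [hdisj] at this; simp at this
      · intro u huS hd
        have hui : u ≠ i := by
          rintro rfl
          have : u ∈ S ∩ A u := mem_inter.mpr ⟨huS, by simp [hA]⟩
          simp only [hA] at this; rw [hdisj] at this; simp at this
        have : u ∈ S ∩ A i := mem_inter.mpr ⟨huS, by
          simp only [hA, mem_insert, mem_filter, mem_univ, true_and]
          exact Or.inr ⟨hui, by rwa [SimpleGraph.dist_comm]⟩⟩
        simp only [hA] at this; rw [hdisj] at this; simp at this
  -- expectation computation
  have hexp : ∑ S ∈ (univ : Finset V).powerset,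
      bw p S * ((S.card : ℝ) + ((U S).card : ℝ)) = E := by
    have hcard : ∀ S : Finset V, ((S.card : ℝ) + ((U S).card : ℝ))
        = ∑ i, ((if i ∈ S then (1:ℝ) else 0) + (if i ∈ U S then (1:ℝ) else 0)) := by
      intro S
      rw [Finset.sum_add_distrib]
      congr 1
      · rw [Finset.sum_ite_mem, univ_inter, Finset.sum_const, nsmul_eq_mul, mul_one]
      · rw [Finset.sum_ite_mem, univ_inter, Finset.sum_const, nsmul_eq_mul, mul_one]
    calc ∑ S ∈ (univ : Finset V).powerset, bw p S * ((S.card : ℝ) + ((U S).card : ℝ))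
        = ∑ S ∈ (univ : Finset V).powerset, ∑ i,
            ((if i ∈ S then bw p S else 0) + (if S ∩ A i = ∅ then bw p S else 0)) := by
          apply Finset.sum_congr rfl
          intro S _
          rw [hcard, Finset.mul_sum]
          apply Finset.sum_congr rfl
          intro i _
          rw [mul_add]
          congr 1
          · by_cases h : i ∈ S <;> simp [h]
          · by_cases h : i ∈ U S
            · rw [if_pos h, if_pos ((hUA S i).mp h), mul_one]
            · rw [if_neg h, if_neg (fun he => h ((hUA S i).mpr he)), mul_zero]
      _ = ∑ i, (∑ S ∈ (univ : Finset V).powerset, (if i ∈ S then bw p S else 0)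
            + ∑ S ∈ (univ : Finset V).powerset, (if S ∩ A i = ∅ then bw p S else 0)) := by
          rw [Finset.sum_comm]
          apply Finset.sum_congr rfl
          intro i _
          rw [Finset.sum_add_distrib]
      _ = E := by
          rw [hE]
          apply Finset.sum_congr rfl
          intro i _
          rw [bw_mem, bw_disj]
          congr 1
          rw [hA, Finset.prod_insert (by simp)]
  -- pick a good S
  have hne : ((univ : Finset V).powerset).Nonempty := ⟨∅, by simp⟩
  have hsum_le : ∑ S ∈ (univ : Finset V).powerset, bw p S * ((S.card : ℝ) + ((U S).card : ℝ))
      ≤ ∑ S ∈ (univ : Finset V).powerset, bw p S * E := by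
    rw [hexp, ← Finset.sum_mul, bw_sum, one_mul]
  obtain ⟨S, _, hS⟩ := Finset.exists_le_of_sum_le hne hsum_le
  have hgood : (S.card : ℝ) + ((U S).card : ℝ) ≤ E :=
    le_of_mul_le_mul_left hS (bw_pos p hp S)
  -- S ∪ U S is a k-dominating set
  have hdom : ∀ v, v ∉ S ∪ U S → ∃ u ∈ S ∪ U S, G.dist u v ≤ k := by
    intro v hv
    have hvS : v ∉ S := fun h => hv (mem_union_left _ h)
    have hvU : v ∉ U S := fun h => hv (mem_union_right _ h)
    have h2 : ¬ (v ∉ S ∧ ∀ u ∈ S, ¬ G.dist u v ≤ k) := by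
      intro hc
      exact hvU (by simp only [hU, mem_filter, mem_univ, true_and]; exact hc)
    push_neg at h2
    obtain ⟨u, huS, hd⟩ := h2 hvS
    exact ⟨u, mem_union_left _ huS, hd⟩
  have hmem : (S ∪ U S).card ∈ {n : ℕ | ∃ D : Finset V, D.card = n ∧
      ∀ v, v ∉ D → ∃ u ∈ D, G.dist u v ≤ k} := ⟨S ∪ U S, rfl, hdom⟩
  have h1 : sInf {n : ℕ | ∃ D : Finset V, D.card = n ∧
      ∀ v, v ∉ D → ∃ u ∈ D, G.dist u v ≤ k} ≤ (S ∪ U S).card := Nat.sInf_le hmem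
  calc ((sInf {n : ℕ | ∃ D : Finset V, D.card = n ∧
        ∀ v, v ∉ D → ∃ u ∈ D, G.dist u v ≤ k} : ℕ) : ℝ)
      ≤ ((S ∪ U S).card : ℝ) := by exact_mod_cast h1
    _ ≤ (S.card : ℝ) + ((U S).card : ℝ) := by
        exact_mod_cast Finset.card_union_le S (U S)
    _ ≤ E := hgood
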